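/- If A is an informationally complete POVM on H_A and B is a pure state informationally complete POVM on H_B, then A⊗B is a pure state informationally complete POVM on H_A ⊗ H_B. -/

import Mathlib

open Matrix Kronecker
open scoped ComplexOrder

noncomputable section

def IsPOVM {n : Type*} [Fintype n] [DecidableEq n] {m : ℕ}
    (A : Fin m → Matrix n n ℂ) : Prop :=
  (∀ x, (A x).PosSemidef) ∧ ∑ x, A x = 1

def IsState {n : Type*} [Fintype n] [DecidableEq n] (ρ : Matrix n n ℂ) : Prop :=
  ρ.PosSemidef ∧ ρ.trace = 1

def IsPureState {n : Type*} [Fintype n] [DecidableEq n] (ρ : Matrix n n ℂ) : Prop :=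
  ρ.IsHermitian ∧ ρ * ρ = ρ ∧ ρ.rank = 1

def Rspan {n : Type*} [Fintype n] [DecidableEq n] {ι : Type*}
    (A : ι → Matrix n n ℂ) : Submodule ℝ (Matrix n n ℂ) :=
  Submodule.span ℝ (Set.range A)

def RPerp {n : Type*} [Fintype n] [DecidableEq n] {m : ℕ}
    (A : Fin m → Matrix n n ℂ) : Set (Matrix n n ℂ) :=
  {T | T.IsHermitian ∧ ∀ S ∈ Rspan A, (S * T).trace = 0}

def herm (n : Type*) [Fintype n] [DecidableEq n] : Submodule ℝ (Matrix n n ℂ) where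
  carrier := {T | T.IsHermitian}
  add_mem' := fun h1 h2 => h1.add h2
  zero_mem' := Matrix.isHermitian_zero
  smul_mem' := fun c T h => by
    rw [Set.mem_setOf_eq, Matrix.IsHermitian, Matrix.conjTranspose_smul, star_trivial, h]

def hermPerp {n : Type*} [Fintype n] [DecidableEq n]
    (V : Submodule ℝ (Matrix n n ℂ)) : Submodule ℝ (Matrix n n ℂ) where
  carrier := {T | T.IsHermitian ∧ ∀ S ∈ V, (S * T).trace = 0}
  add_mem' := fun h1 h2 => ⟨h1.1.add h2.1, fun S hS => by
    rw [mul_add, Matrix.trace_add, h1.2 S hS, h2.2 S hS, add_zero]⟩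
  zero_mem' := ⟨Matrix.isHermitian_zero, fun S _ => by simp⟩
  smul_mem' := fun c T h => ⟨by
      rw [Matrix.IsHermitian, Matrix.conjTranspose_smul, star_trivial, h.1],
    fun S hS => by rw [Matrix.mul_smul, Matrix.trace_smul, h.2 S hS, smul_zero]⟩

def tensSub {nA nB : Type*} [Fintype nA] [DecidableEq nA] [Fintype nB] [DecidableEq nB]
    (U : Submodule ℝ (Matrix nA nA ℂ)) (V : Submodule ℝ (Matrix nB nB ℂ)) :
    Submodule ℝ (Matrix (nA × nB) (nA × nB) ℂ) :=
  Submodule.span ℝ {T | ∃ S ∈ U, ∃ R ∈ V, T = S ⊗ₖ R}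

noncomputable def rankPM {n : Type*} [Fintype n] [DecidableEq n]
    (T : Matrix n n ℂ) (hT : T.IsHermitian) : ℕ :=
  min (Finset.univ.filter fun i => 0 < hT.eigenvalues i).card
      (Finset.univ.filter fun i => hT.eigenvalues i < 0).card

-- auxiliary lemmas

lemma aux_sum_single {d : ℕ} (g : Fin d → Fin d → ℂ) (a : Fin d) (α : ℂ) :
    (∑ x, ∑ y, (starRingEnd ℂ) ((Pi.single a α : Fin d → ℂ) x)
        * ((Pi.single a α : Fin d → ℂ) y) * g x y)
      = (starRingEnd ℂ) α * α * g a a := by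
  simp [Pi.single_apply, apply_ite (starRingEnd ℂ), ite_mul, zero_mul,
    Finset.sum_ite_eq', Finset.mul_sum]

lemma aux_sum_pair {d : ℕ} (g : Fin d → Fin d → ℂ) (a b : Fin d) (α β : ℂ) :
    (∑ x, ∑ y, (starRingEnd ℂ) (((Pi.single a α + Pi.single b β : Fin d → ℂ)) x)
        * ((Pi.single a α + Pi.single b β : Fin d → ℂ) y) * g x y)
      = (starRingEnd ℂ) α * α * g a a + (starRingEnd ℂ) α * β * g a b
        + (starRingEnd ℂ) β * α * g b a + (starRingEnd ℂ) β * β * g b b := by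
  simp only [Pi.add_apply, Pi.single_apply, map_add, apply_ite (starRingEnd ℂ), map_zero,
    add_mul, mul_add, ite_mul, zero_mul, mul_ite, mul_zero, Finset.sum_add_distrib,
    Finset.sum_ite_eq', Finset.mem_univ, if_true]
  ring

lemma aux_polar {d : ℕ} (g : Fin d → Fin d → ℂ)
    (h : ∀ e : Fin d → ℂ, (∑ x, ∑ y, (starRingEnd ℂ) (e x) * e y * g x y) = 0) :
    ∀ a b, g a b = 0 := by
  have hdiag : ∀ a, g a a = 0 := by
    intro a
    have := h ((Pi.single a 1 : Fin d → ℂ))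
    rw [aux_sum_single g a 1] at this
    simpa using this
  intro a b
  rcases eq_or_ne a b with rfl | hab
  · exact hdiag a
  · have h1 := h ((Pi.single a 1 : Fin d → ℂ) + Pi.single b 1)
    rw [aux_sum_pair g a b 1 1] at h1
    have h2 := h ((Pi.single a 1 : Fin d → ℂ) + Pi.single b Complex.I)
    rw [aux_sum_pair g a b 1 Complex.I] at h2
    simp [hdiag, Complex.conj_I] at h1 h2
    -- h1 : g a b + g b a = 0 ; h2 : I * g a b - I * g b a = 0 (roughly)
    have e1 : Complex.I * g a b = Complex.I * g b a := by linear_combination h2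
    have e2 : g a b = g b a := mul_left_cancel₀ Complex.I_ne_zero e1
    linear_combination h1 / 2 + e2 / 2

lemma aux_smul_kron {nA nB : Type*} [Fintype nA] [Fintype nB]
    (c : ℝ) (S : Matrix nA nA ℂ) (R : Matrix nB nB ℂ) :
    (c • S) ⊗ₖ R = c • (S ⊗ₖ R) := by
  ext ⟨p, q⟩ ⟨r, s⟩
  simp [Matrix.kroneckerMap_apply, Complex.real_smul]
  ring

lemma aux_kron_smul {nA nB : Type*} [Fintype nA] [Fintype nB]
    (c : ℝ) (S : Matrix nA nA ℂ) (R : Matrix nB nB ℂ) :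
    S ⊗ₖ (c • R) = c • (S ⊗ₖ R) := by
  ext ⟨p, q⟩ ⟨r, s⟩
  simp [Matrix.kroneckerMap_apply, Complex.real_smul]
  ring

lemma aux_kron_mem {dA dB mA mB : ℕ}
    (A : Fin mA → Matrix (Fin dA) (Fin dA) ℂ) (B : Fin mB → Matrix (Fin dB) (Fin dB) ℂ)
    {S : Matrix (Fin dA) (Fin dA) ℂ} {R : Matrix (Fin dB) (Fin dB) ℂ}
    (hS : S ∈ Rspan A) (hR : R ∈ Rspan B) :
    S ⊗ₖ R ∈ Rspan (fun p : Fin mA × Fin mB => A p.1 ⊗ₖ B p.2) := by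
  induction hS using Submodule.span_induction with
  | mem x hx =>
    obtain ⟨i, rfl⟩ := hx
    induction hR using Submodule.span_induction with
    | mem y hy =>
      obtain ⟨j, rfl⟩ := hy
      exact Submodule.subset_span ⟨(i, j), rfl⟩
    | zero => simp only [Matrix.kronecker_zero]; exact Submodule.zero_mem _
    | add y z _ _ hy hz =>
      rw [Matrix.kronecker_add]; exact Submodule.add_mem _ hy hz
    | smul c y _ hy =>
      rw [aux_kron_smul]; exact Submodule.smul_mem _ c hy
  | zero => simp only [Matrix.zero_kronecker]; exact Submodule.zero_mem _
  | add x y _ _ hx hy =>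
    rw [Matrix.add_kronecker]; exact Submodule.add_mem _ hx hy
  | smul c x _ hx =>
    rw [aux_smul_kron]; exact Submodule.smul_mem _ c hx

theorem stmt12 {dA dB mA mB : ℕ}
    (A : Fin mA → Matrix (Fin dA) (Fin dA) ℂ) (B : Fin mB → Matrix (Fin dB) (Fin dB) ℂ)
    (hA : IsPOVM A) (hB : IsPOVM B)
    (hIC : Rspan A = herm (Fin dA))
    (hPB : ∀ T ∈ hermPerp (Rspan B), T ≠ 0 → 3 ≤ T.rank) :
    ∀ T ∈ hermPerp (Rspan (fun p : Fin mA × Fin mB => A p.1 ⊗ₖ B p.2)),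
      T ≠ 0 → 3 ≤ T.rank := by
  rintro T ⟨hTh, hTperp⟩ hT0
  by_contra hrank
  push_neg at hrank
  apply hT0
  -- key: all slices vanish
  have key : ∀ e : Fin dA → ℂ, ∀ p q : Fin dB,
      (∑ a, ∑ b, (starRingEnd ℂ) (e a) * e b * T (a, p) (b, q)) = 0 := by
    intro e
    set M : Matrix (Fin dA × Fin dB) (Fin dB) ℂ :=
      fun pr j => e pr.1 * (if pr.2 = j then 1 else 0) with hM
    set Te : Matrix (Fin dB) (Fin dB) ℂ := Mᴴ * T * M with hTedef
    have hTeapp : ∀ p q : Fin dB,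
        Te p q = ∑ a, ∑ b, (starRingEnd ℂ) (e a) * e b * T (a, p) (b, q) := by
      intro p q
      rw [hTedef]
      simp only [Matrix.mul_apply, Matrix.conjTranspose_apply, star_mul',
        Fintype.sum_prod_type]
      simp [hM, Finset.sum_mul, Finset.mul_sum, apply_ite, mul_ite, ite_mul, mul_zero,
        zero_mul, Finset.sum_ite_eq', Finset.sum_ite_eq, mul_comm, mul_assoc, mul_left_comm]
      rw [Finset.sum_comm]
    have hTeH : Te.IsHermitian := Matrix.isHermitian_conjTranspose_mul_mul M hTh
    have hTeRank : Te.rank ≤ T.rank := by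
      calc Te.rank ≤ (T * M).rank := by
            rw [hTedef, Matrix.mul_assoc]; exact Matrix.rank_mul_le_right _ _
        _ ≤ T.rank := Matrix.rank_mul_le_left _ _
    set E : Matrix (Fin dA) (Fin dA) ℂ := Matrix.vecMulVec e (star e) with hE
    have hMRM : ∀ R : Matrix (Fin dB) (Fin dB) ℂ, M * R * Mᴴ = E ⊗ₖ R := by
      intro R
      ext ⟨a, i⟩ ⟨b, j⟩
      rw [hE]
      simp only [Matrix.mul_apply, Matrix.conjTranspose_apply, star_mul',
        Matrix.kroneckerMap_apply, Matrix.vecMulVec_apply, Pi.star_apply]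
      simp [hM, Finset.sum_mul, Finset.mul_sum, apply_ite, mul_ite, ite_mul, mul_zero,
        zero_mul, Finset.sum_ite_eq', Finset.sum_ite_eq, Fintype.sum_prod_type,
        mul_comm, mul_assoc, mul_left_comm]
    have hEmem : E ∈ Rspan A := by
      rw [hIC]
      show E.IsHermitian
      ext i j
      simp [hE, Matrix.conjTranspose_apply, Matrix.vecMulVec_apply, mul_comm]
    have hTeperp : ∀ R ∈ Rspan B, (R * Te).trace = 0 := by
      intro R hR
      have htr : (R * Te).trace = ((E ⊗ₖ R) * T).trace := by
        rw [hTedef, ← hMRM R]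
        calc (R * (Mᴴ * T * M)).trace = ((R * Mᴴ * T) * M).trace := by
              rw [Matrix.mul_assoc, Matrix.mul_assoc, Matrix.mul_assoc]
          _ = (M * (R * Mᴴ * T)).trace := Matrix.trace_mul_comm _ _
          _ = ((M * R * Mᴴ) * T).trace := by
              rw [Matrix.mul_assoc, Matrix.mul_assoc, Matrix.mul_assoc]
      rw [htr]
      exact hTperp _ (aux_kron_mem A B hEmem hR)
    have hTe0 : Te = 0 := by
      by_contra h
      have h3 := hPB Te ⟨hTeH, hTeperp⟩ h
      omega
    intro p q
    rw [← hTeapp p q, hTe0]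
    simp
  -- polarization
  ext ⟨a, p⟩ ⟨b, q⟩
  have := aux_polar (fun x y => T (x, p) (y, q)) (fun e => key e p q) a b
  simpa using this
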